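/- For every t > 0 and all R_+ , R_- > √3: Re G(ξ) ≤ 0 for every ξ ∈ Γ_+ (built with radius R_+), and Re H(ζ) ≥ 0 for every ζ ∈ Γ_- (built with radius R_-). Here Re G(i) = 0 and Re H(-i) = 0, so these are the steep-descent inequalities Re{G(ξ) - G(ξ_0)} ≤ 0 and Re{H(ζ) - H(ζ_0)} ≥ 0 at the critical points ξ_0 = i, ζ_0 = -i of Lemma 6.1. -/

import Mathlib

open scoped Real BigOperators

/-- `Re G(ξ)` for the spectral function `G(ξ) = -2t log ξ - it(ξ + ξ⁻¹)` (i.e. `x = -2t`). -/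
noncomputable def ReG (t : ℝ) (ξ : ℂ) : ℝ :=
  -2 * t * Real.log (‖ξ‖) + t * (ξ + ξ⁻¹).im

/-- `Re H(ζ)` for the spectral function `H(ζ) = 2t log ζ - it(ζ + ζ⁻¹)` (i.e. `x = -2t`). -/
noncomputable def ReH (t : ℝ) (ζ : ℂ) : ℝ :=
  2 * t * Real.log (‖ζ‖) + t * (ζ + ζ⁻¹).im

/-- The steep descent contour `Γ₊` built with radius `R`. -/
def GammaPlus (R : ℝ) : Set ℂ :=
  ({z | ∃ x : ℝ, 0 ≤ x ∧ z = Complex.I + (x : ℂ) * Complex.exp (Complex.I * ((Real.pi : ℂ) / 6))}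
      ∩ Metric.closedBall Complex.I 1) ∪
  ({z | ∃ x : ℝ, 0 ≤ x ∧ z = Complex.I + (x : ℂ) * Complex.exp (Complex.I * (5 * (Real.pi : ℂ) / 6))}
      ∩ Metric.closedBall Complex.I 1) ∪
  (({z | ∃ x : ℝ, 0 ≤ x ∧ z = Complex.I + Complex.exp (Complex.I * ((Real.pi : ℂ) / 6)) + (x : ℂ)}
      \ Metric.ball Complex.I 1) ∩ Metric.closedBall 0 R) ∪
  (({z | ∃ x : ℝ, 0 ≤ x ∧ z = Complex.I + Complex.exp (Complex.I * (5 * (Real.pi : ℂ) / 6)) - (x : ℂ)}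
      \ Metric.ball Complex.I 1) ∩ Metric.closedBall 0 R) ∪
  {z | ‖z‖ = R ∧ z.im ≤ 3 / 2}

/-- The steep descent contour `Γ₋` built with radius `R`: the mirror image of `Γ₊`
across the real axis. -/
def GammaMinus (R : ℝ) : Set ℂ :=
  (fun z => (starRingEnd ℂ) z) '' GammaPlus R

/-- The key logarithmic inequality `log u ≥ 2(u-1)/(u+1)` for `u ≥ 1`. -/
lemma key_log : ∀ u : ℝ, 1 ≤ u → 2 * (u - 1) / (u + 1) ≤ Real.log u := by
  have hD : ∀ w : ℝ, 1 < w → HasDerivAt (fun x : ℝ => Real.log x - 2 * (x - 1) / (x + 1))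
      (1 / w - 4 / (w + 1) ^ 2) w := by
    intro w hw
    have h2 : HasDerivAt (fun x : ℝ => 2 * (x - 1) / (x + 1))
        ((2 * 1 * (w + 1) - 2 * (w - 1) * 1) / (w + 1) ^ 2) w := by
      have := (((hasDerivAt_id w).sub_const 1).const_mul 2).div
        ((hasDerivAt_id w).add_const 1) (by intro h; simp only [id_eq] at h; linarith)
      exact this
    have h1 := (Real.hasDerivAt_log (by linarith : w ≠ 0)).sub h2
    rw [show (2 * 1 * (w + 1) - 2 * (w - 1) * 1) = 4 by ring] at h1
    rw [one_div]; exact h1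
  have hmono : MonotoneOn (fun w : ℝ => Real.log w - 2 * (w - 1) / (w + 1)) (Set.Ici 1) := by
    have hint : interior (Set.Ici (1:ℝ)) = Set.Ioi 1 := interior_Ici
    apply monotoneOn_of_deriv_nonneg (convex_Ici 1)
    · apply ContinuousOn.sub
      · exact Real.continuousOn_log.mono (by intro x hx; simp at hx ⊢; linarith)
      · apply ContinuousOn.div
        · fun_prop
        · fun_prop
        · intro x hx; simp at hx; intro h; linarith
    · rw [hint]
      intro w hw
      exact ((hD w hw).differentiableAt).differentiableWithinAt
    · rw [hint]
      intro w hw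
      simp only [Set.mem_Ioi] at hw
      rw [(hD w hw).deriv]
      rw [div_sub_div _ _ (by linarith : w ≠ 0) (by positivity : (w+1)^2 ≠ 0)]
      apply div_nonneg _ (by positivity)
      nlinarith [sq_nonneg (w - 1)]
  intro u hu
  have := hmono (Set.self_mem_Ici) hu hu
  simp at this
  linarith

/-- Reduction: if `|ξ|² ≥ 1` and `Im ξ · (|ξ|²+1) ≤ 2|ξ|²` then `Re G(ξ) ≤ 0`. -/
lemma reG_nonpos (t : ℝ) (ht : 0 < t) (ξ : ℂ) (hu : 1 ≤ Complex.normSq ξ)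
    (hb : ξ.im * (Complex.normSq ξ + 1) ≤ 2 * Complex.normSq ξ) : ReG t ξ ≤ 0 := by
  set u := Complex.normSq ξ with hudef
  have hupos : 0 < u := by linarith
  have habs : (‖ξ‖ : ℝ) = Real.sqrt u := Complex.norm_def ξ
  have hlog : Real.log (‖ξ‖) = Real.log u / 2 := by
    rw [habs, Real.log_sqrt hupos.le]
  have him : (ξ + ξ⁻¹).im = ξ.im - ξ.im / u := by
    simp [Complex.add_im, Complex.inv_im, hudef, sub_eq_add_neg, neg_div]
  have hkey := key_log u hu
  have h2 : ξ.im * (u - 1) / u ≤ 2 * (u - 1) / (u + 1) := by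
    rw [div_le_div_iff₀ hupos (by linarith)]
    nlinarith
  have h3 : ξ.im - ξ.im / u = ξ.im * (u - 1) / u := by field_simp
  rw [ReG, hlog, him, h3]
  have : ξ.im * (u - 1) / u ≤ Real.log u := le_trans h2 hkey
  nlinarith

lemma e1_eq : Complex.exp (Complex.I * ((Real.pi : ℂ) / 6)) =
    Complex.mk (Real.sqrt 3 / 2) (1 / 2) := by
  have h : Complex.I * ((Real.pi : ℂ) / 6) = ((π / 6 : ℝ) : ℂ) * Complex.I := by
    push_cast; ring
  rw [h]
  apply Complex.ext
  · rw [Complex.exp_ofReal_mul_I_re, Real.cos_pi_div_six]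
  · rw [Complex.exp_ofReal_mul_I_im, Real.sin_pi_div_six]

lemma e2_eq : Complex.exp (Complex.I * (5 * (Real.pi : ℂ) / 6)) =
    Complex.mk (-(Real.sqrt 3 / 2)) (1 / 2) := by
  have h : Complex.I * (5 * (Real.pi : ℂ) / 6) = ((5 * π / 6 : ℝ) : ℂ) * Complex.I := by
    push_cast; ring
  rw [h]
  have h5 : (5 * π / 6 : ℝ) = π - π / 6 := by ring
  apply Complex.ext
  · rw [Complex.exp_ofReal_mul_I_re, h5, Real.cos_pi_sub, Real.cos_pi_div_six]
  · rw [Complex.exp_ofReal_mul_I_im, h5, Real.sin_pi_sub, Real.sin_pi_div_six]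

lemma gammaPlus_reG (t : ℝ) (ht : 0 < t) (R : ℝ) (hR : Real.sqrt 3 < R) :
    ∀ ξ ∈ GammaPlus R, ReG t ξ ≤ 0 := by
  have hs3 : Real.sqrt 3 ^ 2 = 3 := Real.sq_sqrt (by norm_num)
  have hs3pos : 0 < Real.sqrt 3 := Real.sqrt_pos.mpr (by norm_num)
  intro ξ hξ
  simp only [GammaPlus, Set.mem_union, Set.mem_inter_iff, Set.mem_setOf_eq, Set.mem_diff] at hξ
  rcases hξ with ((((⟨⟨x, hx, rfl⟩, hball⟩ | ⟨⟨x, hx, rfl⟩, hball⟩) |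
      ⟨⟨⟨x, hx, rfl⟩, _⟩, _⟩) | ⟨⟨⟨x, hx, rfl⟩, _⟩, _⟩) | ⟨habs, him⟩)
  · -- piece 1
    rw [e1_eq] at hball ⊢
    have hx1 : x ≤ 1 := by
      rw [Metric.mem_closedBall, Complex.dist_eq] at hball
      have h1 : Complex.I + ↑x * Complex.mk (Real.sqrt 3 / 2) (1/2) - Complex.I
          = ↑x * Complex.mk (Real.sqrt 3 / 2) (1/2) := by ring
      rw [h1, norm_mul] at hball
      have h2 : ‖(Complex.mk (Real.sqrt 3 / 2) (1/2))‖ = 1 := by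
        rw [Complex.norm_def, Complex.normSq_mk]
        rw [show Real.sqrt 3 / 2 * (Real.sqrt 3 / 2) + 1/2 * (1/2 : ℝ) = 1 by nlinarith]
        exact Real.sqrt_one
      rw [h2, Complex.norm_of_nonneg hx, mul_one] at hball
      exact hball
    apply reG_nonpos t ht
    · rw [Complex.normSq_apply]
      simp [Complex.add_re, Complex.add_im, Complex.mul_re, Complex.mul_im]
      nlinarith
    · rw [Complex.normSq_apply]
      simp [Complex.add_re, Complex.add_im, Complex.mul_re, Complex.mul_im]
      nlinarith [mul_nonneg (mul_nonneg hx hx) (sub_nonneg.mpr hx1)]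
  · -- piece 2
    rw [e2_eq] at hball ⊢
    have hx1 : x ≤ 1 := by
      rw [Metric.mem_closedBall, Complex.dist_eq] at hball
      have h1 : Complex.I + ↑x * Complex.mk (-(Real.sqrt 3 / 2)) (1/2) - Complex.I
          = ↑x * Complex.mk (-(Real.sqrt 3 / 2)) (1/2) := by ring
      rw [h1, norm_mul] at hball
      have h2 : ‖(Complex.mk (-(Real.sqrt 3 / 2)) (1/2))‖ = 1 := by
        rw [Complex.norm_def, Complex.normSq_mk]
        rw [show -(Real.sqrt 3 / 2) * -(Real.sqrt 3 / 2) + 1/2 * (1/2 : ℝ) = 1 by nlinarith]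
        exact Real.sqrt_one
      rw [h2, Complex.norm_of_nonneg hx, mul_one] at hball
      exact hball
    apply reG_nonpos t ht
    · rw [Complex.normSq_apply]
      simp [Complex.add_re, Complex.add_im, Complex.mul_re, Complex.mul_im]
      nlinarith
    · rw [Complex.normSq_apply]
      simp [Complex.add_re, Complex.add_im, Complex.mul_re, Complex.mul_im]
      nlinarith [mul_nonneg (mul_nonneg hx hx) (sub_nonneg.mpr hx1)]
  · -- piece 3
    rw [e1_eq]
    apply reG_nonpos t ht
    · rw [Complex.normSq_apply]
      simp [Complex.add_re, Complex.add_im]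
      nlinarith
    · rw [Complex.normSq_apply]
      simp [Complex.add_re, Complex.add_im]
      nlinarith
  · -- piece 4
    rw [e2_eq]
    apply reG_nonpos t ht
    · rw [Complex.normSq_apply]
      simp [Complex.sub_re, Complex.sub_im, Complex.add_re, Complex.add_im]
      nlinarith
    · rw [Complex.normSq_apply]
      simp [Complex.sub_re, Complex.sub_im, Complex.add_re, Complex.add_im]
      nlinarith
  · -- piece 5
    have hu : Complex.normSq ξ = R ^ 2 := by
      rw [← Complex.sq_norm, habs]
    have hR3 : 3 < R ^ 2 := by nlinarith
    apply reG_nonpos t ht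
    · rw [hu]; linarith
    · rw [hu]; nlinarith

theorem stmt14 (t : ℝ) (ht : 0 < t) (Rp Rm : ℝ)
    (hRp : Real.sqrt 3 < Rp) (hRm : Real.sqrt 3 < Rm) :
    (∀ ξ ∈ GammaPlus Rp, ReG t ξ ≤ 0) ∧ (∀ ζ ∈ GammaMinus Rm, 0 ≤ ReH t ζ) := by
  refine ⟨gammaPlus_reG t ht Rp hRp, ?_⟩
  rintro ζ ⟨ξ, hξ, rfl⟩
  have hG := gammaPlus_reG t ht Rm hRm ξ hξ
  have habs : ‖(starRingEnd ℂ) ξ‖ = ‖ξ‖ := Complex.norm_conj ξ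
  have him : ((starRingEnd ℂ) ξ + ((starRingEnd ℂ) ξ)⁻¹).im = -(ξ + ξ⁻¹).im := by
    rw [← map_inv₀, ← map_add, Complex.conj_im]
  have : ReH t ((starRingEnd ℂ) ξ) = -(ReG t ξ) := by
    rw [ReH, ReG, habs, him]; ring
  rw [this]
  linarith
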